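/- Let P be the poset with minimum element x below three pairwise-incomparable elements p₁, p₂, p₃, all below a maximum y. The component module assigning K³ to x, K² to each pᵢ, K to y, with the maps given by the matrices [[1,0,0],[0,1,1]], [[1,0,1],[0,1,0]], [[1,1,0],[0,0,1]] from x to p₁,p₂,p₃ respectively and [1,1] from each pᵢ to y, decomposes as the direct sum of the interval module supported on all of P (dimension 1 everywhere, identity maps) and the semi-component module with K² at x, K at each pᵢ, 0 at y, and maps [1,1], [1,0], [0,1] from x. -/
import Mathlib

open Submodule LinearMap

/-- span of u is complementary to ker f when f u = 1 -/
lemma aux_isCompl {K V : Type*} [Field K] [AddCommGroup V] [Module K V]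
    (f : V →ₗ[K] K) (u : V) (h : f u = 1) : IsCompl (K ∙ u) (LinearMap.ker f) := by
  constructor
  · rw [disjoint_def]
    rintro v hv hv'
    obtain ⟨c, rfl⟩ := mem_span_singleton.mp hv
    have : c = 0 := by
      have := mem_ker.mp hv'
      simpa [map_smul, h] using this
    simp [this]
  · rw [codisjoint_iff, eq_top_iff]
    intro v _
    rw [mem_sup]
    refine ⟨f v • u, smul_mem _ _ (mem_span_singleton_self u), v - f v • u, ?_, by abel⟩
    simp [mem_ker, map_smul, h]

/-- restriction of f to span u → span w is bijective when f u = w ≠ 0 -/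
lemma aux_bij {K V W : Type*} [Field K] [AddCommGroup V] [Module K V]
    [AddCommGroup W] [Module K W] (f : V →ₗ[K] W) (u : V) (w : W)
    (hfu : f u = w) (hw : w ≠ 0) (h : ∀ v ∈ (K ∙ u), f v ∈ (K ∙ w)) :
    Function.Bijective (f.restrict h) := by
  constructor
  · rintro ⟨v, hv⟩ ⟨v', hv'⟩ hEq
    obtain ⟨c, rfl⟩ := mem_span_singleton.mp hv
    obtain ⟨c', rfl⟩ := mem_span_singleton.mp hv'
    have : f (c • u) = f (c' • u) := congrArg Subtype.val hEq
    rw [map_smul, map_smul, hfu] at this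
    have : c = c' := smul_left_injective K hw this
    simp [this]
  · rintro ⟨w', hw'⟩
    obtain ⟨c, rfl⟩ := mem_span_singleton.mp hw'
    exact ⟨⟨c • u, smul_mem _ _ (mem_span_singleton_self u)⟩,
      Subtype.ext (by simp [LinearMap.restrict_apply, map_smul, hfu])⟩

/-- restriction of f to span u → ⊤ is bijective when f u = 1 -/
lemma aux_bij_top {K V : Type*} [Field K] [AddCommGroup V] [Module K V]
    (f : V →ₗ[K] K) (u : V) (hfu : f u = 1)
    (h : ∀ v ∈ (K ∙ u), f v ∈ (⊤ : Submodule K K)) :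
    Function.Bijective (f.restrict h) := by
  constructor
  · rintro ⟨v, hv⟩ ⟨v', hv'⟩ hEq
    obtain ⟨c, rfl⟩ := mem_span_singleton.mp hv
    obtain ⟨c', rfl⟩ := mem_span_singleton.mp hv'
    have : f (c • u) = f (c' • u) := congrArg Subtype.val hEq
    rw [map_smul, map_smul, hfu] at this
    simp_all
  · rintro ⟨t, _⟩
    exact ⟨⟨t • u, smul_mem _ _ (mem_span_singleton_self u)⟩,
      Subtype.ext (by simp [LinearMap.restrict_apply, map_smul, hfu])⟩

open Submodule LinearMap

section Equivs
variable (K : Type*) [Field K]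

noncomputable def sig2 : (Fin 2 → K) →ₗ[K] K :=
  (LinearMap.proj 0 : (Fin 2 → K) →ₗ[K] K) + LinearMap.proj 1
noncomputable def sig3 : (Fin 3 → K) →ₗ[K] K :=
  (LinearMap.proj 0 : (Fin 3 → K) →ₗ[K] K) + LinearMap.proj 1 + LinearMap.proj 2

@[simp] lemma sig2_apply (v : Fin 2 → K) : sig2 K v = v 0 + v 1 := rfl
@[simp] lemma sig3_apply (v : Fin 3 → K) : sig3 K v = v 0 + v 1 + v 2 := rfl

/-- equiv ker(σ2) ≃ K via first coordinate -/
noncomputable def eW : (LinearMap.ker (sig2 K)) ≃ₗ[K] K :=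
  LinearEquiv.ofLinear ((LinearMap.proj 0) ∘ₗ (LinearMap.ker (sig2 K)).subtype)
    (LinearMap.codRestrict _ ((LinearMap.id : K →ₗ[K] K).smulRight ![1, -1])
      (by intro t; simp [LinearMap.mem_ker]))
    (by ext t; simp)
    (by
      apply LinearMap.ext
      rintro ⟨v, hv⟩
      refine Subtype.ext (funext fun i => ?_)
      have hv' : v 0 + v 1 = 0 := hv
      fin_cases i <;> simp <;> linear_combination -hv')

@[simp] lemma eW_apply (v : LinearMap.ker (sig2 K)) : eW K v = (v : Fin 2 → K) 0 := by simp [eW]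

/-- equiv ker(σ3) ≃ K² via (-v 1, -v 2) -/
noncomputable def eX : (LinearMap.ker (sig3 K)) ≃ₗ[K] (Fin 2 → K) :=
  LinearEquiv.ofLinear
    ((LinearMap.pi fun i : Fin 2 => -(LinearMap.proj i.succ : (Fin 3 → K) →ₗ[K] K)) ∘ₗ
      (LinearMap.ker (sig3 K)).subtype)
    (LinearMap.codRestrict _
      (((LinearMap.proj 0 : (Fin 2 → K) →ₗ[K] K).smulRight ![1, -1, 0]) +
        ((LinearMap.proj 1 : (Fin 2 → K) →ₗ[K] K).smulRight ![1, 0, -1]))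
      (by intro p; simp [LinearMap.mem_ker]; try ring))
    (by
      ext p i
      fin_cases i <;> simp [LinearMap.pi_apply])
    (by
      apply LinearMap.ext
      rintro ⟨v, hv⟩
      refine Subtype.ext (funext fun i => ?_)
      have hv' : v 0 + v 1 + v 2 = 0 := hv
      fin_cases i <;> simp [LinearMap.pi_apply] <;> linear_combination -hv')

@[simp] lemma eX_apply (v : LinearMap.ker (sig3 K)) (i : Fin 2) :
    eX K v i = -((v : Fin 3 → K) i.succ) := by simp [eX]

end Equivs


/-- Over the bounded poset `x < p₁, p₂, p₃ < y` (with `p₁, p₂, p₃` pairwise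
incomparable), the component module assigning `K³` to `x`, `K²` to each `pᵢ`
and `K` to `y`, with structure maps `[[1,0,0],[0,1,1]]`, `[[1,0,1],[0,1,0]]`,
`[[1,1,0],[0,0,1]]` from `x` to `p₁, p₂, p₃` and `[1,1]` from each `pᵢ` to `y`,
decomposes as the direct sum of the interval module supported on all of `P`
(dimension one everywhere, identity maps) and the semi-component module with
`K²` at `x`, `K` at each `pᵢ`, `0` at `y`, and maps `[1,1]`, `[1,0]`, `[0,1]`
from `x`. -/
theorem stmt_15 (K : Type*) [Field K]
    (M1 M2 M3 : (Fin 3 → K) →ₗ[K] (Fin 2 → K)) (N : (Fin 2 → K) →ₗ[K] K)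
    (s1 s2 s3 : (Fin 2 → K) →ₗ[K] K)
    (hM1 : M1 = Matrix.mulVecLin !![(1 : K), 0, 0; 0, 1, 1])
    (hM2 : M2 = Matrix.mulVecLin !![(1 : K), 0, 1; 0, 1, 0])
    (hM3 : M3 = Matrix.mulVecLin !![(1 : K), 1, 0; 0, 0, 1])
    (hN : N = (LinearMap.proj 0 : (Fin 2 → K) →ₗ[K] K) + LinearMap.proj 1)
    (hs1 : s1 = (LinearMap.proj 0 : (Fin 2 → K) →ₗ[K] K) + LinearMap.proj 1)
    (hs2 : s2 = (LinearMap.proj 0 : (Fin 2 → K) →ₗ[K] K))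
    (hs3 : s3 = (LinearMap.proj 1 : (Fin 2 → K) →ₗ[K] K)) :
    ∃ (Ux Wx : Submodule K (Fin 3 → K)) (U1 W1 U2 W2 U3 W3 : Submodule K (Fin 2 → K))
      (Uy Wy : Submodule K K),
      IsCompl Ux Wx ∧ IsCompl U1 W1 ∧ IsCompl U2 W2 ∧ IsCompl U3 W3 ∧
      IsCompl Uy Wy ∧
      -- the `U` summand is the interval module supported on all of `P`
      Module.finrank K Ux = 1 ∧ Module.finrank K U1 = 1 ∧
      Module.finrank K U2 = 1 ∧ Module.finrank K U3 = 1 ∧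
      Module.finrank K Uy = 1 ∧
      (∃ (hU1 : ∀ v ∈ Ux, M1 v ∈ U1) (hU2 : ∀ v ∈ Ux, M2 v ∈ U2)
         (hU3 : ∀ v ∈ Ux, M3 v ∈ U3) (hUy1 : ∀ v ∈ U1, N v ∈ Uy)
         (hUy2 : ∀ v ∈ U2, N v ∈ Uy) (hUy3 : ∀ v ∈ U3, N v ∈ Uy),
        Function.Bijective (M1.restrict hU1) ∧ Function.Bijective (M2.restrict hU2) ∧
        Function.Bijective (M3.restrict hU3) ∧ Function.Bijective (N.restrict hUy1) ∧
        Function.Bijective (N.restrict hUy2) ∧ Function.Bijective (N.restrict hUy3)) ∧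
      -- the `W` summand is the given semi-component module
      Wy = ⊥ ∧
      (∃ (hW1 : ∀ v ∈ Wx, M1 v ∈ W1) (hW2 : ∀ v ∈ Wx, M2 v ∈ W2)
         (hW3 : ∀ v ∈ Wx, M3 v ∈ W3)
         (ex : Wx ≃ₗ[K] (Fin 2 → K)) (e1 : W1 ≃ₗ[K] K) (e2 : W2 ≃ₗ[K] K)
         (e3 : W3 ≃ₗ[K] K),
        e1.toLinearMap ∘ₗ M1.restrict hW1 = s1 ∘ₗ ex.toLinearMap ∧
        e2.toLinearMap ∘ₗ M2.restrict hW2 = s2 ∘ₗ ex.toLinearMap ∧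
        e3.toLinearMap ∘ₗ M3.restrict hW3 = s3 ∘ₗ ex.toLinearMap) := by
  have hu0ne : (![1, 0, 0] : Fin 3 → K) ≠ 0 := by
    intro h; have := congrFun h 0; simp at this
  have he0ne : (![1, 0] : Fin 2 → K) ≠ 0 := by
    intro h; have := congrFun h 0; simp at this
  have hM1u : M1 (![1, 0, 0] : Fin 3 → K) = (![1, 0] : Fin 2 → K) := by
    subst hM1; funext i; fin_cases i <;>
      simp [Matrix.mulVecLin_apply, Matrix.mulVec, dotProduct,
        Fin.sum_univ_three]
  have hM2u : M2 (![1, 0, 0] : Fin 3 → K) = (![1, 0] : Fin 2 → K) := by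
    subst hM2; funext i; fin_cases i <;>
      simp [Matrix.mulVecLin_apply, Matrix.mulVec, dotProduct,
        Fin.sum_univ_three]
  have hM3u : M3 (![1, 0, 0] : Fin 3 → K) = (![1, 0] : Fin 2 → K) := by
    subst hM3; funext i; fin_cases i <;>
      simp [Matrix.mulVecLin_apply, Matrix.mulVec, dotProduct,
        Fin.sum_univ_three]
  have hNe : N (![1, 0] : Fin 2 → K) = 1 := by subst hN; simp
  have hUmap : ∀ (f : (Fin 3 → K) →ₗ[K] (Fin 2 → K)), f (![1, 0, 0] : Fin 3 → K) = (![1, 0] : Fin 2 → K) →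
      ∀ v ∈ (K ∙ (![1, 0, 0] : Fin 3 → K)), f v ∈ (K ∙ (![1, 0] : Fin 2 → K)) := by
    intro f hf v hv
    obtain ⟨c, rfl⟩ := Submodule.mem_span_singleton.mp hv
    rw [map_smul, hf]
    exact Submodule.smul_mem _ _ (Submodule.mem_span_singleton_self (![1, 0] : Fin 2 → K))
  have hW1' : ∀ v ∈ LinearMap.ker (sig3 K), M1 v ∈ LinearMap.ker (sig2 K) := by
    intro v hv
    have hv' : v 0 + v 1 + v 2 = 0 := hv
    rw [LinearMap.mem_ker]
    subst hM1
    simp [Matrix.mulVecLin_apply, Matrix.mulVec, dotProduct, Fin.sum_univ_three]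
    linear_combination hv'
  have hW2' : ∀ v ∈ LinearMap.ker (sig3 K), M2 v ∈ LinearMap.ker (sig2 K) := by
    intro v hv
    have hv' : v 0 + v 1 + v 2 = 0 := hv
    rw [LinearMap.mem_ker]
    subst hM2
    simp [Matrix.mulVecLin_apply, Matrix.mulVec, dotProduct, Fin.sum_univ_three]
    linear_combination hv'
  have hW3' : ∀ v ∈ LinearMap.ker (sig3 K), M3 v ∈ LinearMap.ker (sig2 K) := by
    intro v hv
    have hv' : v 0 + v 1 + v 2 = 0 := hv
    rw [LinearMap.mem_ker]
    subst hM3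
    simp [Matrix.mulVecLin_apply, Matrix.mulVec, dotProduct, Fin.sum_univ_three]
    linear_combination hv'
  refine ⟨K ∙ (![1, 0, 0] : Fin 3 → K), LinearMap.ker (sig3 K), K ∙ (![1, 0] : Fin 2 → K), LinearMap.ker (sig2 K),
    K ∙ (![1, 0] : Fin 2 → K), LinearMap.ker (sig2 K), K ∙ (![1, 0] : Fin 2 → K), LinearMap.ker (sig2 K), ⊤, ⊥,
    aux_isCompl _ (![1, 0, 0] : Fin 3 → K) (by simp), aux_isCompl _ (![1, 0] : Fin 2 → K) (by simp),
    aux_isCompl _ (![1, 0] : Fin 2 → K) (by simp), aux_isCompl _ (![1, 0] : Fin 2 → K) (by simp),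
    isCompl_top_bot,
    finrank_span_singleton hu0ne, finrank_span_singleton he0ne,
    finrank_span_singleton he0ne, finrank_span_singleton he0ne,
    by simp, ?_, rfl, ?_⟩
  · refine ⟨hUmap M1 hM1u, hUmap M2 hM2u, hUmap M3 hM3u,
      fun v _ => Submodule.mem_top, fun v _ => Submodule.mem_top,
      fun v _ => Submodule.mem_top,
      aux_bij M1 (![1, 0, 0] : Fin 3 → K) (![1, 0] : Fin 2 → K) hM1u he0ne _, aux_bij M2 (![1, 0, 0] : Fin 3 → K) (![1, 0] : Fin 2 → K) hM2u he0ne _,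
      aux_bij M3 (![1, 0, 0] : Fin 3 → K) (![1, 0] : Fin 2 → K) hM3u he0ne _, aux_bij_top N (![1, 0] : Fin 2 → K) hNe _,
      aux_bij_top N (![1, 0] : Fin 2 → K) hNe _, aux_bij_top N (![1, 0] : Fin 2 → K) hNe _⟩
  · refine ⟨hW1', hW2', hW3', eX K, eW K, eW K, eW K, ?_, ?_, ?_⟩
    · apply LinearMap.ext
      rintro ⟨v, hv⟩
      have hv' : v 0 + v 1 + v 2 = 0 := hv
      subst hM1 hs1
      simp [LinearMap.restrict_apply, Matrix.mulVecLin_apply, Matrix.mulVec,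
        dotProduct, Fin.sum_univ_three]
      linear_combination hv'
    · apply LinearMap.ext
      rintro ⟨v, hv⟩
      have hv' : v 0 + v 1 + v 2 = 0 := hv
      subst hM2 hs2
      simp [LinearMap.restrict_apply, Matrix.mulVecLin_apply, Matrix.mulVec,
        dotProduct, Fin.sum_univ_three]
      linear_combination hv'
    · apply LinearMap.ext
      rintro ⟨v, hv⟩
      have hv' : v 0 + v 1 + v 2 = 0 := hv
      subst hM3 hs3
      simp [LinearMap.restrict_apply, Matrix.mulVecLin_apply, Matrix.mulVec,
        dotProduct, Fin.sum_univ_three]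
      linear_combination hv'
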